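/- Let 1 ≤ k < n with (k, p) ≠ (1, 2), let U be an F_p-subspace of F_q of codimension k, and define f_2 : F_q → F_q by f_2(x) = 1 if x ∈ U and f_2(x) = 0 if x ∉ U. Then AddInd(f_2) = p^k. Moreover, if (k, p) = (1, 2), then f_2 has codimension 0. -/

import Mathlib

open Polynomial

/-- A function `f : 𝔽_q → 𝔽_q` (with `q = p^n`) has codimension at most `k` if there are an
`𝔽_p`-linear map `L : 𝔽_q → 𝔽_q`, an `𝔽_p`-subspace `U` of dimension `n - k`, and a constant
`a_V` for each coset `V` of `U`, such that `f(x) = L(x) + a_{U+x}` for all `x`. -/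
def HasCodimAtMost (p n : ℕ) {F : Type*} [Field F] [Fintype F] [Algebra (ZMod p) F]
    (f : F → F) (k : ℕ) : Prop :=
  ∃ (L : F →ₗ[ZMod p] F) (U : Submodule (ZMod p) F) (a : F ⧸ U → F),
    Module.finrank (ZMod p) ↥U = n - k ∧
    ∀ x : F, f x = L x + a (Submodule.Quotient.mk x)

/-- The codimension `codim f` is the smallest `k` such that `f` has codimension at most `k`. -/
noncomputable def codim (p n : ℕ) {F : Type*} [Field F] [Fintype F] [Algebra (ZMod p) F]
    (f : F → F) : ℕ :=
  sInf {k | HasCodimAtMost p n f k}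

/-- The additive index of `f` is `AddInd f = p ^ codim f`. -/
noncomputable def addInd (p n : ℕ) {F : Type*} [Field F] [Fintype F] [Algebra (ZMod p) F]
    (f : F → F) : ℕ :=
  p ^ codim p n f

/-- Let `1 ≤ k < n`, let `U` be an `𝔽_p`-subspace of `𝔽_q` of codimension
`k`, and let `f₂` be the indicator function of `U`. If `(k, p) ≠ (1, 2)` then
`AddInd f₂ = p^k`; moreover if `(k, p) = (1, 2)` then `f₂` has codimension `0`. -/
theorem stmt14 (p n : ℕ) [Fact p.Prime] (hn : 1 ≤ n) {F : Type*} [Field F] [Fintype F]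
    [Algebra (ZMod p) F] (hcard : Fintype.card F = p ^ n)
    (k : ℕ) (hk : 1 ≤ k) (hkn : k < n)
    (U : Submodule (ZMod p) F) [DecidablePred (· ∈ U)]
    (hU : Module.finrank (ZMod p) ↥U = n - k)
    (f2 : F → F) (hf2 : ∀ x : F, f2 x = if x ∈ U then 1 else 0) :
    (¬(k = 1 ∧ p = 2) → addInd p n f2 = p ^ k) ∧
    ((k = 1 ∧ p = 2) → codim p n f2 = 0) := by
  classical
  have hp := (Fact.out : p.Prime)
  haveI : CharP F p := charP_of_injective_algebraMap (algebraMap (ZMod p) F).injective p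
  haveI : Module.Finite (ZMod p) F := Module.Finite.of_finite
  -- finrank of F
  have hfr : Module.finrank (ZMod p) F = n := by
    have h := Module.card_eq_pow_finrank (K := ZMod p) (V := F)
    rw [ZMod.card, hcard] at h
    exact (Nat.pow_right_injective hp.two_le h.symm)
  -- card of U
  have hcardU : Fintype.card ↥U = p ^ (n - k) := by
    have h := Module.card_eq_pow_finrank (K := ZMod p) (V := ↥U)
    rw [ZMod.card, hU] at h
    exact h
  -- membership of k in the set
  have hkmem : HasCodimAtMost p n f2 k := by
    refine ⟨0, U, fun v => if v = 0 then 1 else 0, hU, fun x => ?_⟩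
    rw [hf2]
    simp [Submodule.Quotient.mk_eq_zero]
  set S := {j | HasCodimAtMost p n f2 j} with hS
  have hSne : S.Nonempty := ⟨k, hkmem⟩
  constructor
  · -- main case
    intro hne
    have h2k : 2 < p ^ k := by
      rcases eq_or_ne p 2 with hp2 | hp2
      · have hk2 : 2 ≤ k := by
          by_contra h
          exact hne ⟨by omega, hp2⟩
        subst hp2
        calc 2 < 2 ^ 2 := by norm_num
        _ ≤ 2 ^ k := Nat.pow_le_pow_right (by norm_num) hk2
      · have hp3 : 3 ≤ p := by have := hp.two_le; omega
        calc 2 < 3 := by norm_num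
        _ ≤ p := hp3
        _ = p ^ 1 := (pow_one p).symm
        _ ≤ p ^ k := Nat.pow_le_pow_right hp.pos hk
    -- lower bound: codim = k
    have hcod : codim p n f2 = k := by
      have hmem := Nat.sInf_mem hSne
      by_contra hne2
      have hlt : sInf S < k := lt_of_le_of_ne (Nat.sInf_le hkmem) hne2
      obtain ⟨L, W, a, hW, hfa⟩ := hmem
      set m := sInf S with hm
      -- W is not contained in U
      have hWU : ¬ W ≤ U := by
        intro hle
        have := Submodule.finrank_mono hle
        rw [hW, hU] at this
        omega
      obtain ⟨w, hwW, hwU⟩ := SetLike.not_le_iff_exists.mp hWU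
      have key : ∀ x : F, f2 (x + w) = f2 x + L w := by
        intro x
        have hq : (Submodule.Quotient.mk (x + w) : F ⧸ W) = Submodule.Quotient.mk x := by
          rw [Submodule.Quotient.eq]
          simpa using hwW
        rw [hfa (x + w), hfa x, hq, map_add]
        ring
      have hLw : L w = -1 := by
        have h0 := key 0
        rw [zero_add, hf2, hf2] at h0
        simp [hwU, U.zero_mem] at h0
        linear_combination -h0
      -- find x with x ∉ U and x + w ∉ U
      have hex : ∃ x : F, x ∉ U ∧ x + w ∉ U := by
        by_contra hno
        push_neg at hno
        have hno' : ∀ x : F, x ∈ U ∨ x + w ∈ U := by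
          intro x
          by_cases hx : x ∈ U
          · exact Or.inl hx
          · exact Or.inr (hno x hx)
        set A := Finset.univ.filter (fun x : F => x ∈ U) with hA
        set B := Finset.univ.filter (fun x : F => x + w ∈ U) with hB
        have hcover : (Finset.univ : Finset F) ⊆ A ∪ B := by
          intro x _
          rcases hno' x with h | h
          · exact Finset.mem_union_left _ (by simp [hA, h])
          · exact Finset.mem_union_right _ (by simp [hB, h])
        have hcA : A.card = p ^ (n - k) := by
          rw [← hcardU]
          exact (Fintype.card_subtype _).symm
        have hBA : B = A.image (fun y => y - w) := by
          ext x
          simp only [hA, hB, Finset.mem_image, Finset.mem_filter, Finset.mem_univ, true_and]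
          constructor
          · intro h; exact ⟨x + w, h, by ring⟩
          · rintro ⟨y, hy, rfl⟩; simpa using hy
        have hcB : B.card = p ^ (n - k) := by
          rw [hBA, Finset.card_image_of_injective _ (fun a b hab => by simpa using hab), hcA]
        have hle : Fintype.card F ≤ A.card + B.card :=
          le_trans (by simpa using Finset.card_le_card hcover) (Finset.card_union_le A B)
        rw [hcard, hcA, hcB] at hle
        have hsplit : p ^ n = p ^ (n - k) * p ^ k := by
          rw [← pow_add]
          congr 1
          omega
        rw [hsplit] at hle
        have h3 : p ^ (n - k) * 3 ≤ p ^ (n - k) * p ^ k :=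
          Nat.mul_le_mul_left _ (by omega)
        have hpos : 0 < p ^ (n - k) := Nat.pow_pos hp.pos
        omega
      obtain ⟨x, hx, hxw⟩ := hex
      have h := key x
      rw [hf2, hf2, hLw] at h
      simp [hx, hxw] at h
    rw [addInd, hcod]
  · -- degenerate case (k, p) = (1, 2)
    rintro ⟨hk1, hp2⟩
    subst hk1; subst hp2
    -- char 2
    have hchar2 : ∀ x : F, x + x = 0 := by
      intro x
      have := CharP.cast_eq_zero F 2
      have h2 : (2 : F) = 0 := by exact_mod_cast this
      calc x + x = 2 * x := by ring
      _ = 0 := by rw [h2, zero_mul]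
    -- quotient has card 2
    haveI : Fintype (F ⧸ U) := Fintype.ofFinite _
    have hcq : Fintype.card (F ⧸ U) = 2 := by
      have h := Module.card_eq_pow_finrank (K := ZMod 2) (V := F ⧸ U)
      rw [ZMod.card] at h
      have hq : Module.finrank (ZMod 2) (F ⧸ U) = 1 := by
        have := Submodule.finrank_quotient_add_finrank U
        rw [hU, hfr] at this
        omega
      rw [hq, pow_one] at h
      exact h
    have hcoset : ∀ x y : F, x ∉ U → y ∉ U → x + y ∈ U := by
      intro x y hx hy
      have hmx : (Submodule.Quotient.mk x : F ⧸ U) ≠ 0 := by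
        simpa [Submodule.Quotient.mk_eq_zero] using hx
      have hmy : (Submodule.Quotient.mk y : F ⧸ U) ≠ 0 := by
        simpa [Submodule.Quotient.mk_eq_zero] using hy
      have hxy : (Submodule.Quotient.mk x : F ⧸ U) = Submodule.Quotient.mk y := by
        by_contra hne
        have h3 : ({0, Submodule.Quotient.mk x, Submodule.Quotient.mk y} : Finset (F ⧸ U)).card = 3 := by
          rw [Finset.card_insert_of_notMem (by
              simp only [Finset.mem_insert, Finset.mem_singleton]
              push_neg
              exact ⟨fun h => hmx h.symm, fun h => hmy h.symm⟩),
            Finset.card_insert_of_notMem (by simpa using hne), Finset.card_singleton]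
        have := Finset.card_le_univ ({0, Submodule.Quotient.mk x, Submodule.Quotient.mk y} : Finset (F ⧸ U))
        rw [h3, hcq] at this
        omega
      have hsub : x - y ∈ U := (Submodule.Quotient.eq U).mp hxy
      have hxy2 : x + y = x - y := by linear_combination hchar2 y
      rw [hxy2]
      exact hsub
    -- the linear part
    have hnotU : ∀ x y : F, x ∈ U → y ∉ U → x + y ∉ U := by
      intro x y hx hy hxy
      exact hy (by simpa using U.sub_mem hxy hx)
    let g : F →+ F :=
      { toFun := fun x => if x ∈ U then 0 else 1
        map_zero' := by simp [U.zero_mem]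
        map_add' := by
          intro x y
          by_cases hx : x ∈ U <;> by_cases hy : y ∈ U
          · simp [hx, hy, U.add_mem hx hy]
          · simp [hx, hy, hnotU x y hx hy]
          · have : y + x ∉ U := hnotU y x hy hx
            rw [add_comm] at this
            simp [hx, hy, this]
          · simp [hx, hy, hcoset x y hx hy, hchar2 1] }
    have h0mem : HasCodimAtMost 2 n f2 0 := by
      refine ⟨g.toZModLinearMap 2, ⊤, fun _ => 1, ?_, fun x => ?_⟩
      · rw [finrank_top, hfr]; omega
      · rw [hf2]
        by_cases hx : x ∈ U
        · simp [g, hx]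
        · have hgx : ((g.toZModLinearMap 2) x : F) = 1 := by
            show (if x ∈ U then (0 : F) else 1) = 1
            simp [hx]
          rw [if_neg hx, hgx]
          exact (hchar2 1).symm
    have : codim 2 n f2 ≤ 0 := Nat.sInf_le h0mem
    omega
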